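/- Let P⁺, P⁻ be mutually singular probability measures, γ ∈ (0,1], a > 0. Consider the two-player game where the discriminator minimizes L_D(D, P_g) = E_{P⁺}[D] + γE_{P_g}[max(0, a−D)] + (1−γ)E_{P⁻}[max(0, a−D)] over measurable D: X → [0,∞), and the generator minimizes L_G(D, P_g) = γE_{P_g}[D] + (1−γ)E_{P⁻}[D] − E_{P⁺}[D] over probability measures P_g. Then at P_g* = P⁺, the optimal discriminator value is L_D(D*, P⁺) = a − (a/2)·2(1−γ) = aγ, and the generator value L_G(D*, P⁺) = a(1−γ)/2 achieves the infimum of P_g ↦ L_G(D*(P_g), P_g) where D*(P_g) is the optimal discriminator against P_g; i.e., the pair (D*, P⁺) is a Nash equilibrium. -/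

import Mathlib

open MeasureTheory Set

/-- Total variation norm of a signed measure: `‖μ‖_TV = |μ|(X)`. -/
noncomputable def tv {X : Type*} [MeasurableSpace X] (μ : SignedMeasure X) : ℝ :=
  (μ.totalVariation Set.univ).toReal

/-- Discriminator loss `L_D(D, P_g)` of the image-level game. -/
noncomputable def LD {X : Type*} [MeasurableSpace X] (Pp Pn : Measure X) (a γ : ℝ)
    (D : X → ℝ) (Pg : Measure X) : ℝ :=
  (∫ x, D x ∂Pp) + γ * (∫ x, max 0 (a - D x) ∂Pg)
    + (1 - γ) * (∫ x, max 0 (a - D x) ∂Pn)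

lemma int_bdd {X : Type*} [MeasurableSpace X] (μ : Measure X) [IsFiniteMeasure μ]
    {D : X → ℝ} (hD : Measurable D) {a : ℝ} (h : ∀ x, D x ∈ Set.Icc 0 a) :
    Integrable D μ := by
  refine (integrable_const a).mono' hD.aestronglyMeasurable ?_
  filter_upwards with x
  rw [Real.norm_eq_abs, abs_of_nonneg (h x).1]
  exact (h x).2

/-- Nash equilibrium of the image-level game: at `P_g* = P⁺` the optimal discriminator
value is `inf_D L_D(D, P⁺) = a - (a/2)·2(1-γ) = aγ`, and the corresponding generator
value `a - inf_D L_D(D, P⁺)` is the least value of `P_g ↦ a - inf_D L_D(D, P_g)`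
(i.e. of `P_g ↦ L_G(D*(P_g), P_g)`) over all probability measures `P_g`. -/
theorem stmt15 {X : Type*} [MeasurableSpace X] (Pp Pn : Measure X)
    [IsProbabilityMeasure Pp] [IsProbabilityMeasure Pn]
    (S : Set X) (hS : MeasurableSet S) (hSp : Pp S = 1) (hSn : Pn S = 0)
    (a γ : ℝ) (ha : 0 < a) (hγ : γ ∈ Set.Ioc (0 : ℝ) 1) :
    sInf {v : ℝ | ∃ D : X → ℝ, Measurable D ∧ (∀ x, D x ∈ Set.Icc 0 a) ∧
        v = LD Pp Pn a γ D Pp} = a - (a / 2) * (2 * (1 - γ)) ∧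
    a - (a / 2) * (2 * (1 - γ)) = a * γ ∧
    IsLeast {v : ℝ | ∃ (Pg : Measure X) (_ : IsProbabilityMeasure Pg),
        v = a - sInf {w : ℝ | ∃ D : X → ℝ, Measurable D ∧ (∀ x, D x ∈ Set.Icc 0 a) ∧
          w = LD Pp Pn a γ D Pg}}
      (a - sInf {v : ℝ | ∃ D : X → ℝ, Measurable D ∧ (∀ x, D x ∈ Set.Icc 0 a) ∧
        v = LD Pp Pn a γ D Pp}) := by
  obtain ⟨hγ0, hγ1⟩ := hγ
  -- the witness discriminator
  set D₀ : X → ℝ := Sᶜ.indicator (fun _ => a) with hD₀def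
  have hD₀meas : Measurable D₀ := measurable_const.indicator hS.compl
  have hD₀mem : ∀ x, D₀ x ∈ Set.Icc 0 a := by
    intro x
    by_cases hx : x ∈ Sᶜ <;> simp [hD₀def, Set.indicator, hx, ha.le]
  have hM : ∀ x, max 0 (a - D₀ x) = S.indicator (fun _ => a) x := by
    intro x
    by_cases hx : x ∈ S <;>
      simp [hD₀def, Set.indicator, hx, max_eq_right, ha.le]
  have hPpc : Pp Sᶜ = 0 := by
    have := measure_compl hS (measure_ne_top Pp S)
    rw [hSp, measure_univ] at this
    simp [this]
  -- compute LD at D₀ for any measure Pg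
  have hLD0 : ∀ Pg : Measure X, LD Pp Pn a γ D₀ Pg
      = γ * ((Pg S).toReal * a) := by
    intro Pg
    have h1 : (∫ x, D₀ x ∂Pp) = 0 := by
      rw [hD₀def, MeasureTheory.integral_indicator_const (a : ℝ) hS.compl, measureReal_def, hPpc]
      simp
    have h2 : (∫ x, max 0 (a - D₀ x) ∂Pg) = (Pg S).toReal * a := by
      simp_rw [hM]
      rw [MeasureTheory.integral_indicator_const (a : ℝ) hS]
      simp [smul_eq_mul, measureReal_def]
    have h3 : (∫ x, max 0 (a - D₀ x) ∂Pn) = 0 := by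
      simp_rw [hM]
      rw [MeasureTheory.integral_indicator_const (a : ℝ) hS, measureReal_def, hSn]
      simp
    rw [LD, h1, h3]
    have h2' := h2
    rw [h2']
    ring
  -- every value of LD (with D in [0,a]) is nonnegative
  have hnn : ∀ (Pg : Measure X) (D : X → ℝ), (∀ x, D x ∈ Set.Icc 0 a) →
      0 ≤ LD Pp Pn a γ D Pg := by
    intro Pg D hDm
    have i1 : 0 ≤ ∫ x, D x ∂Pp := integral_nonneg fun x => (hDm x).1
    have i2 : 0 ≤ ∫ x, max 0 (a - D x) ∂Pg := integral_nonneg fun x => le_max_left _ _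
    have i3 : 0 ≤ ∫ x, max 0 (a - D x) ∂Pn := integral_nonneg fun x => le_max_left _ _
    have := mul_nonneg hγ0.le i2
    have := mul_nonneg (by linarith : (0:ℝ) ≤ 1 - γ) i3
    rw [LD]; linarith
  -- lower bound at Pg = Pp
  have hlb : ∀ D : X → ℝ, Measurable D → (∀ x, D x ∈ Set.Icc 0 a) →
      a * γ ≤ LD Pp Pn a γ D Pp := by
    intro D hDm hDmem
    have hInt : Integrable D Pp := int_bdd Pp hDm hDmem
    have hMmem : ∀ x, max 0 (a - D x) ∈ Set.Icc (0 : ℝ) a := by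
      intro x
      constructor
      · exact le_max_left _ _
      · have := (hDmem x).1
        exact max_le ha.le (by linarith)
    have hMmeas : Measurable fun x => max 0 (a - D x) :=
      measurable_const.max ((measurable_const.sub hDm))
    have hIntM : Integrable (fun x => max 0 (a - D x)) Pp := int_bdd Pp hMmeas hMmem
    have hsum : (∫ x, D x ∂Pp) + γ * (∫ x, max 0 (a - D x) ∂Pp)
        = ∫ x, (D x + γ * max 0 (a - D x)) ∂Pp := by
      rw [integral_add hInt (hIntM.const_mul γ), integral_const_mul]
    have hpt : ∀ x, a * γ ≤ D x + γ * max 0 (a - D x) := by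
      intro x
      obtain ⟨h0, h1⟩ := hDmem x
      have hmx : max 0 (a - D x) = a - D x := max_eq_right (by linarith)
      rw [hmx]
      nlinarith
    have hge : a * γ ≤ ∫ x, (D x + γ * max 0 (a - D x)) ∂Pp := by
      have := integral_mono (integrable_const (a * γ))
        (hInt.add (hIntM.const_mul γ)) hpt
      simpa using this
    have i3 : 0 ≤ ∫ x, max 0 (a - D x) ∂Pn := integral_nonneg fun x => le_max_left _ _
    have h3 : 0 ≤ (1 - γ) * ∫ x, max 0 (a - D x) ∂Pn :=
      mul_nonneg (by linarith) i3
    rw [LD]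
    linarith [hsum ▸ hge]
  -- the infimum at Pg = Pp
  have hmemPp : a * γ ∈ {v : ℝ | ∃ D : X → ℝ, Measurable D ∧ (∀ x, D x ∈ Set.Icc 0 a) ∧
      v = LD Pp Pn a γ D Pp} := by
    refine ⟨D₀, hD₀meas, hD₀mem, ?_⟩
    rw [hLD0 Pp, hSp]
    simp [mul_comm]
  have hInfPp : sInf {v : ℝ | ∃ D : X → ℝ, Measurable D ∧ (∀ x, D x ∈ Set.Icc 0 a) ∧
      v = LD Pp Pn a γ D Pp} = a * γ := by
    apply le_antisymm
    · exact csInf_le ⟨0, fun v ⟨D, _, hDm, hv⟩ => hv ▸ hnn Pp D hDm⟩ hmemPp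
    · exact le_csInf ⟨a * γ, hmemPp⟩ fun v ⟨D, hDmeas, hDm, hv⟩ => hv ▸ hlb D hDmeas hDm
  have hring : a - (a / 2) * (2 * (1 - γ)) = a * γ := by ring
  refine ⟨by rw [hInfPp, hring], hring, ?_⟩
  constructor
  · exact ⟨Pp, inferInstance, rfl⟩
  · rintro v ⟨Pg, hPg, rfl⟩
    have hBdd : BddBelow {w : ℝ | ∃ D : X → ℝ, Measurable D ∧ (∀ x, D x ∈ Set.Icc 0 a) ∧
        w = LD Pp Pn a γ D Pg} :=
      ⟨0, fun w ⟨D, _, hDm, hw⟩ => hw ▸ hnn Pg D hDm⟩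
    have hmemG : LD Pp Pn a γ D₀ Pg ∈ {w : ℝ | ∃ D : X → ℝ, Measurable D ∧
        (∀ x, D x ∈ Set.Icc 0 a) ∧ w = LD Pp Pn a γ D Pg} :=
      ⟨D₀, hD₀meas, hD₀mem, rfl⟩
    have hle : LD Pp Pn a γ D₀ Pg ≤ a * γ := by
      rw [hLD0 Pg]
      have h1 : (Pg S).toReal ≤ 1 := by
        simpa using ENNReal.toReal_mono ENNReal.one_ne_top prob_le_one
      have h2 : (Pg S).toReal * a ≤ a := mul_le_of_le_one_left ha.le h1
      have h3 : γ * ((Pg S).toReal * a) ≤ γ * a := mul_le_mul_of_nonneg_left h2 hγ0.le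
      linarith
    have : sInf {w : ℝ | ∃ D : X → ℝ, Measurable D ∧ (∀ x, D x ∈ Set.Icc 0 a) ∧
        w = LD Pp Pn a γ D Pg} ≤ a * γ := le_trans (csInf_le hBdd hmemG) hle
    rw [hInfPp]
    linarith
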